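/- Let j be a positive integer, n = ⌈(-3 + √(8j+1))/2⌉, r = j - n(n+1)/2, and define m = r - 1 if (n even and r odd) or (n odd and r even), and m = -r if (n even and r even) or (n odd and r odd). Then |m| ≤ n and n - m is even. -/
import Mathlib


theorem recovered_m_is_bornwolf (j : ℕ) (hj : 1 ≤ j) (n r m : ℤ)
    (hn : n = ⌈(-3 + Real.sqrt (8 * j + 1)) / 2⌉)
    (hr : r = (j : ℤ) - n * (n + 1) / 2)
    (hm : m = if (Even n ↔ Even r) then -r else r - 1) :
    |m| ≤ n ∧ (2 : ℤ) ∣ (n - m) := by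
  have hs0 : (0:ℝ) ≤ Real.sqrt (8 * j + 1) := Real.sqrt_nonneg _
  have hs2 : Real.sqrt (8 * j + 1) ^ 2 = 8 * j + 1 := Real.sq_sqrt (by positivity)
  set s := Real.sqrt (8 * j + 1) with hsdef
  have hj' : (1:ℝ) ≤ j := by exact_mod_cast hj
  have hs3 : (3:ℝ) ≤ s := by nlinarith
  have h1 : (-3 + s)/2 ≤ (n:ℝ) := by rw [hn]; exact Int.le_ceil _
  have h2 : (n:ℝ) < (-3 + s)/2 + 1 := by rw [hn]; exact Int.ceil_lt_add_one _
  have hn0 : (0:ℤ) ≤ n := by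
    have : (0:ℝ) ≤ (n:ℝ) := by linarith
    exact_mod_cast this
  have hn0' : (0:ℝ) ≤ (n:ℝ) := by exact_mod_cast hn0
  have hub : 8 * (j:ℤ) + 1 ≤ (2*n+3)^2 := by
    have hsle : s ≤ 2*(n:ℝ)+3 := by linarith
    have : (8*(j:ℝ)+1) ≤ (2*(n:ℝ)+3)^2 := by nlinarith
    exact_mod_cast this
  have hlb : (2*n+1)^2 < 8 * (j:ℤ) + 1 := by
    have hsgt : (2*(n:ℝ)+1) < s := by linarith
    have : (2*(n:ℝ)+1)^2 < 8*(j:ℝ)+1 := by nlinarith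
    exact_mod_cast this
  obtain ⟨k, hk⟩ := Int.even_mul_succ_self n
  have hr' : r = (j:ℤ) - k := by rw [hr, hk]; omega
  have e1 : 2*(j:ℤ) ≤ 2*k + 2*n + 2 := by nlinarith
  have e2 : 2*k < 2*(j:ℤ) := by nlinarith
  rw [abs_le]
  split_ifs at hm with h <;> rw [Int.even_iff, Int.even_iff] at h <;>
    refine ⟨⟨?_, ?_⟩, ?_⟩ <;> omega
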